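/- The generic (structural) rank of a structured matrix equals the size of a maximum matching in its associated bipartite graph. -/

import Mathlib

/-- A structured `m×n` matrix is given by a zero/free pattern
`P : Fin m → Fin n → Bool`; a realization vanishes on the fixed zeros. -/
def Realizes {m n : ℕ} (P : Fin m → Fin n → Bool)
    (A : Matrix (Fin m) (Fin n) ℝ) : Prop :=
  ∀ i j, P i j = false → A i j = 0

/-- Edge set of the bipartite graph of the pattern: `(i, j)` is an edge iff
entry `(i, j)` is a free parameter. -/
def patternEdges {m n : ℕ} (P : Fin m → Fin n → Bool) :
    Finset (Fin m × Fin n) :=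
  Finset.univ.filter fun p => P p.1 p.2 = true

/-- `M` is a matching in the bipartite graph with edge set `E`. -/
def IsMatching {m n : ℕ} (E M : Finset (Fin m × Fin n)) : Prop :=
  M ⊆ E ∧ ∀ e ∈ M, ∀ f ∈ M, (e.1 = f.1 ∨ e.2 = f.2) → e = f

open Matrix

-- rank of an arbitrary submatrix is at most the rank
lemma rank_submatrix_le' {m n r s : ℕ} (A : Matrix (Fin m) (Fin n) ℝ)
    (f : Fin r → Fin m) (g : Fin s → Fin n) :
    (A.submatrix f g).rank ≤ A.rank := by
  classical
  have h : A.submatrix f g =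
      ((1 : Matrix (Fin m) (Fin m) ℝ).submatrix f id) * A *
      ((1 : Matrix (Fin n) (Fin n) ℝ).submatrix id g) := by
    ext i j
    simp [Matrix.mul_apply, Matrix.one_apply, Finset.sum_ite_eq, Finset.sum_ite_eq']
  rw [h]
  exact (Matrix.rank_mul_le_left _ _).trans (Matrix.rank_mul_le_right _ _)

-- select linearly independent columns
lemma exists_cols {n : ℕ} {ι : Type*} [Fintype ι] (A : Matrix ι (Fin n) ℝ) :
    ∃ g : Fin A.rank → Fin n, Function.Injective g ∧
      LinearIndependent ℝ (fun k => Aᵀ (g k)) := by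
  classical
  obtain ⟨b, hbs, hspan, hli⟩ := exists_linearIndependent ℝ (Set.range Aᵀ)
  have hbfin : b.Finite := (Set.finite_range Aᵀ).subset hbs
  haveI : Fintype b := hbfin.fintype
  have hcard : Fintype.card b = A.rank := by
    rw [rank_eq_finrank_span_cols]
    change Fintype.card b = Module.finrank ℝ (Submodule.span ℝ (Set.range Aᵀ))
    rw [← hspan, finrank_span_set_eq_card hli,
      Set.toFinset_card]
  let e : Fin A.rank ≃ b := (Fintype.equivFinOfCardEq hcard).symm
  have hc : ∀ x : b, ∃ j, Aᵀ j = (x : ι → ℝ) := fun x => hbs x.2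
  choose c hcspec using hc
  refine ⟨fun k => c (e k), ?_, ?_⟩
  · intro k l hkl
    apply e.injective
    apply Subtype.ext
    rw [← hcspec (e k), ← hcspec (e l)]
    exact congrArg _ hkl
  · have : (fun k => Aᵀ (c (e k))) = (fun k => ((e k : b) : ι → ℝ)) := by
      funext k; exact hcspec (e k)
    rw [this]
    exact hli.comp e e.injective

lemma exists_det_submatrix {m n : ℕ} (A : Matrix (Fin m) (Fin n) ℝ) :
    ∃ (f : Fin A.rank → Fin m) (g : Fin A.rank → Fin n),
      Function.Injective f ∧ Function.Injective g ∧ (A.submatrix f g).det ≠ 0 := by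
  classical
  obtain ⟨g, hg, hgli⟩ := exists_cols A
  set B : Matrix (Fin m) (Fin A.rank) ℝ := A.submatrix id g with hB
  have hBt : Bᵀ = fun k => Aᵀ (g k) := by
    ext k i; rfl
  have hBtrank : Bᵀ.rank = A.rank := by
    rw [hBt]
    have := (hBt ▸ hgli : LinearIndependent ℝ Bᵀ).rank_matrix
    rw [Fintype.card_fin] at this
    rw [← hBt]; exact this
  obtain ⟨f', hf', hfli⟩ := exists_cols Bᵀ
  let ecast : Fin A.rank ≃ Fin Bᵀ.rank := finCongr hBtrank.symm
  refine ⟨fun k => f' (ecast k), g, ?_, hg, ?_⟩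
  · intro k l hkl
    exact ecast.injective (hf' hkl)
  · have hrows : LinearIndependent ℝ (fun k => (A.submatrix (fun k => f' (ecast k)) g) k) := by
      have h2 : (fun k => (A.submatrix (fun k => f' (ecast k)) g) k)
          = (fun k => Bᵀᵀ (f' (ecast k))) := by
        ext k l; rfl
      rw [h2]
      exact hfli.comp ecast ecast.injective
    have := Matrix.linearIndependent_rows_iff_isUnit.mp hrows
    rw [Matrix.isUnit_iff_isUnit_det, isUnit_iff_ne_zero] at this
    exact this

lemma rank_le_matching {m n : ℕ} (P : Fin m → Fin n → Bool)
    (A : Matrix (Fin m) (Fin n) ℝ) (hA : Realizes P A) :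
    ∃ M', IsMatching (patternEdges P) M' ∧ A.rank ≤ M'.card := by
  classical
  obtain ⟨f, g, hf, hg, hdet⟩ := exists_det_submatrix A
  set C := A.submatrix f g with hC
  -- find a permutation with all entries nonzero
  have hterm : ∃ σ : Equiv.Perm (Fin A.rank), ∀ k, C (σ k) k ≠ 0 := by
    by_contra hcon
    push_neg at hcon
    apply hdet
    rw [Matrix.det_apply]
    apply Finset.sum_eq_zero
    intro σ _
    obtain ⟨k, hk⟩ := hcon σ
    have hz : ∏ i, C (σ i) i = 0 := Finset.prod_eq_zero (Finset.mem_univ k) hk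
    rw [hz, smul_zero]
  obtain ⟨σ, hσ⟩ := hterm
  refine ⟨Finset.image (fun k => (f (σ k), g k)) Finset.univ, ⟨?_, ?_⟩, ?_⟩
  · intro p hp
    simp only [Finset.mem_image, Finset.mem_univ, true_and] at hp
    obtain ⟨k, rfl⟩ := hp
    simp only [patternEdges, Finset.mem_filter, Finset.mem_univ, true_and]
    by_contra hP
    have hP' : P (f (σ k)) (g k) = false := by
      cases h : P (f (σ k)) (g k) with
      | false => rfl
      | true => exact absurd h hP
    exact hσ k (hA _ _ hP')
  · intro e he f' hf' hef
    simp only [Finset.mem_image, Finset.mem_univ, true_and] at he hf'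
    obtain ⟨k, rfl⟩ := he
    obtain ⟨l, rfl⟩ := hf'
    rcases hef with h | h
    · have : k = l := σ.injective (hf h)
      rw [this]
    · have : k = l := hg h
      rw [this]
  · rw [Finset.card_image_of_injective]
    · simp
    · intro k l hkl
      exact hg (congrArg Prod.snd hkl)

/-- The generic (structural) rank of a structured matrix equals the size of a
maximum matching in its associated bipartite graph: there is a maximum
matching `M` such that some realization attains rank `|M|`, and every
realization has rank at most `|M|`. -/
theorem generic_rank_eq_max_matching
    {m n : ℕ} (P : Fin m → Fin n → Bool) :
    ∃ M : Finset (Fin m × Fin n), IsMatching (patternEdges P) M ∧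
      (∀ M', IsMatching (patternEdges P) M' → M'.card ≤ M.card) ∧
      (∃ A, Realizes P A ∧ A.rank = M.card) ∧
      (∀ A, Realizes P A → A.rank ≤ M.card) := by
  classical
  -- maximum matching exists
  set E := patternEdges P with hE
  let T : Finset (Finset (Fin m × Fin n)) :=
    Finset.univ.filter (fun M => IsMatching E M)
  have hTne : T.Nonempty := by
    refine ⟨∅, ?_⟩
    simp only [T, Finset.mem_filter, Finset.mem_univ, true_and]
    exact ⟨Finset.empty_subset _, by simp⟩
  obtain ⟨M, hMT, hmax⟩ := T.exists_max_image Finset.card hTne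
  have hM : IsMatching E M := by
    simp only [T, Finset.mem_filter, Finset.mem_univ, true_and] at hMT
    exact hMT
  have hmax' : ∀ M', IsMatching E M' → M'.card ≤ M.card := by
    intro M' hM'
    exact hmax M' (by simpa [T] using hM')
  -- upper bound for all realizations
  have hub : ∀ A, Realizes P A → A.rank ≤ M.card := by
    intro A hA
    obtain ⟨M', hM', hle⟩ := rank_le_matching P A hA
    exact hle.trans (hmax' M' hM')
  -- construct the realization attaining the bound
  refine ⟨M, hM, hmax', ?_, hub⟩
  set A : Matrix (Fin m) (Fin n) ℝ :=
    Matrix.of (fun i j => if (i, j) ∈ M then (1 : ℝ) else 0) with hAdef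
  have hreal : Realizes P A := by
    intro i j hP
    have : (i, j) ∉ M := by
      intro hmem
      have := hM.1 hmem
      simp only [hE, patternEdges, Finset.mem_filter] at this
      rw [this.2] at hP
      simp at hP
    simp [hAdef, this]
  refine ⟨A, hreal, le_antisymm (hub A hreal) ?_⟩
  -- lower bound: the submatrix indexed by M is the identity
  let e : Fin M.card ≃ {x // x ∈ M} := M.equivFin.symm
  let f : Fin M.card → Fin m := fun k => ((e k : Fin m × Fin n)).1
  let g : Fin M.card → Fin n := fun k => ((e k : Fin m × Fin n)).2
  have hgInj : Function.Injective g := by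
    intro k l hkl
    apply e.injective
    apply Subtype.ext
    exact hM.2 _ (e k).2 _ (e l).2 (Or.inr hkl)
  have hsub : A.submatrix f g = (1 : Matrix (Fin M.card) (Fin M.card) ℝ) := by
    ext k l
    by_cases h : k = l
    · subst h
      have : (f k, g k) ∈ M := (e k).2
      simp [hAdef, this, Matrix.one_apply]
    · have : (f k, g l) ∉ M := by
        intro hmem
        have heq : (f k, g l) = ((e k : Fin m × Fin n)) :=
          hM.2 _ hmem _ (e k).2 (Or.inl rfl)
        have h2 := congrArg Prod.snd heq
        exact h (hgInj h2).symm
      simp [hAdef, this, Matrix.one_apply, h]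
  have : (A.submatrix f g).rank = M.card := by
    rw [hsub, Matrix.rank_one, Fintype.card_fin]
  calc (M.card : ℕ) = (A.submatrix f g).rank := this.symm
    _ ≤ A.rank := rank_submatrix_le' A f g
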